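/- Assume (H1). For all C0 > 0 and C1 > 0 there exists M̃ > 0 (depending only on ν, χ1, χ2, λ1, λ2, μ1, μ2, a_sup, C0 and C1, and in particular independent of T) such that: for every T > 0 and every classical solution (u, v1, v2, h) of the FBP on [0, T] with admissible initial data (u0, h0) satisfying sup_{[0,h0]} u0 ≤ C0, sup_{[0,h0]} |u0'| ≤ C1, and 0 ≤ u(t,x) ≤ C0 for all 0 ≤ t ≤ T, 0 ≤ x ≤ h(t), one has 0 ≤ h'(t) ≤ M̃ for all t ∈ (0, T]. -/

import Mathlib

open Set Filter Topology

/-- positive part of a real number -/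
noncomputable def pp (x : ℝ) : ℝ := max x 0

/-- the constant M from the paper -/
noncomputable def Mconst (χ1 χ2 lam1 lam2 μ1 μ2 : ℝ) : ℝ :=
  min ((1 / lam2) * (pp (χ2 * μ2 * lam2 - χ1 * μ1 * lam1) + χ1 * μ1 * pp (lam1 - lam2)))
      ((1 / lam1) * (pp (χ2 * μ2 * lam2 - χ1 * μ1 * lam1) + χ2 * μ2 * pp (lam1 - lam2)))

/-- the constant K from the paper -/
noncomputable def Kconst (χ1 χ2 lam1 lam2 μ1 μ2 : ℝ) : ℝ :=
  min ((1 / lam2) * (|χ1 * μ1 * lam1 - χ2 * μ2 * lam2| + χ1 * μ1 * |lam1 - lam2|))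
      ((1 / lam1) * (|χ1 * μ1 * lam1 - χ2 * μ2 * lam2| + χ2 * μ2 * |lam1 - lam2|))

/-- infimum of a coefficient function over ℝ × [0,∞) -/
noncomputable def infOn (f : ℝ → ℝ → ℝ) : ℝ := sInf {y | ∃ t x, 0 ≤ x ∧ f t x = y}

/-- supremum of a coefficient function over ℝ × [0,∞) -/
noncomputable def supOn (f : ℝ → ℝ → ℝ) : ℝ := sSup {y | ∃ t x, 0 ≤ x ∧ f t x = y}

/-- the constant M0 from the paper -/
noncomputable def M0const (χ1 χ2 lam1 lam2 μ1 μ2 : ℝ) (a b : ℝ → ℝ → ℝ) : ℝ :=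
  supOn a / (infOn b + χ2 * μ2 - χ1 * μ1 - Mconst χ1 χ2 lam1 lam2 μ1 μ2)

/-- the constant m0 from the paper -/
noncomputable def m0const (χ1 χ2 lam1 lam2 μ1 μ2 : ℝ) (a b : ℝ → ℝ → ℝ) : ℝ :=
  infOn a * (infOn b - (1 + supOn a / infOn a) * χ1 * μ1 + χ2 * μ2 - Mconst χ1 χ2 lam1 lam2 μ1 μ2) /
    ((infOn b - χ1 * μ1 + χ2 * μ2 - Mconst χ1 χ2 lam1 lam2 μ1 μ2) * (supOn b - χ1 * μ1 + χ2 * μ2))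

/-- a bounded C¹ coefficient function on ℝ × [0,∞) with positive infimum -/
structure Coeff (f : ℝ → ℝ → ℝ) : Prop where
  bdd : ∃ C, ∀ t x, 0 ≤ x → |f t x| ≤ C
  smooth : ContDiffOn ℝ 1 (Function.uncurry f) (univ ×ˢ Ici 0)
  inf_pos : 0 < infOn f

/-- admissible initial data for the free boundary problem -/
structure AdmissibleInit (u0 : ℝ → ℝ) (h0 : ℝ) : Prop where
  h0_pos : 0 < h0
  smooth : ContDiffOn ℝ 2 u0 (Icc 0 h0)
  nonneg : ∀ x ∈ Icc 0 h0, 0 ≤ u0 x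
  neumann : deriv u0 0 = 0
  dirichlet : u0 h0 = 0

/-- A classical solution of the free boundary problem (FBP) on the time interval `J`,
with `Jr ⊆ J` the set of times strictly above the initial time (where the parabolic
regularity and the parabolic equation are required). -/
structure IsSol (ν χ1 χ2 lam1 lam2 μ1 μ2 : ℝ) (a b : ℝ → ℝ → ℝ)
    (J Jr : Set ℝ) (u v1 v2 : ℝ → ℝ → ℝ) (h : ℝ → ℝ) : Prop where
  h_pos : ∀ t ∈ J, 0 < h t
  /-- h is C¹ and satisfies the Stefan condition h'(t) = -ν uₓ(t,h(t)) -/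
  h_deriv : ∀ t ∈ J, HasDerivAt h (-(ν * deriv (u t) (h t))) t
  h_deriv_cont : ContinuousOn (deriv h) J
  u_nonneg : ∀ t ∈ J, ∀ x ∈ Icc 0 (h t), 0 ≤ u t x
  v1_nonneg : ∀ t ∈ J, ∀ x ∈ Icc 0 (h t), 0 ≤ v1 t x
  v2_nonneg : ∀ t ∈ J, ∀ x ∈ Icc 0 (h t), 0 ≤ v2 t x
  u_cont : ContinuousOn (Function.uncurry u) {p : ℝ × ℝ | p.1 ∈ J ∧ p.2 ∈ Icc 0 (h p.1)}
  v1_cont : ContinuousOn (Function.uncurry v1) {p : ℝ × ℝ | p.1 ∈ J ∧ p.2 ∈ Icc 0 (h p.1)}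
  v2_cont : ContinuousOn (Function.uncurry v2) {p : ℝ × ℝ | p.1 ∈ J ∧ p.2 ∈ Icc 0 (h p.1)}
  u_diff_x : ∀ t ∈ Jr, ∀ x ∈ Icc 0 (h t),
    DifferentiableAt ℝ (u t) x ∧ DifferentiableAt ℝ (deriv (u t)) x
  u_diff_t : ∀ t ∈ Jr, ∀ x ∈ Icc 0 (h t), DifferentiableAt ℝ (fun s => u s x) t
  v1_diff_x : ∀ t ∈ J, ∀ x ∈ Icc 0 (h t),
    DifferentiableAt ℝ (v1 t) x ∧ DifferentiableAt ℝ (deriv (v1 t)) x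
  v2_diff_x : ∀ t ∈ J, ∀ x ∈ Icc 0 (h t),
    DifferentiableAt ℝ (v2 t) x ∧ DifferentiableAt ℝ (deriv (v2 t)) x
  ux_cont : ContinuousOn (fun p : ℝ × ℝ => deriv (u p.1) p.2)
    {p : ℝ × ℝ | p.1 ∈ Jr ∧ p.2 ∈ Icc 0 (h p.1)}
  uxx_cont : ContinuousOn (fun p : ℝ × ℝ => deriv (deriv (u p.1)) p.2)
    {p : ℝ × ℝ | p.1 ∈ Jr ∧ p.2 ∈ Icc 0 (h p.1)}
  ut_cont : ContinuousOn (fun p : ℝ × ℝ => deriv (fun s => u s p.2) p.1)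
    {p : ℝ × ℝ | p.1 ∈ Jr ∧ p.2 ∈ Icc 0 (h p.1)}
  v1x_cont : ContinuousOn (fun p : ℝ × ℝ => deriv (v1 p.1) p.2)
    {p : ℝ × ℝ | p.1 ∈ J ∧ p.2 ∈ Icc 0 (h p.1)}
  v2x_cont : ContinuousOn (fun p : ℝ × ℝ => deriv (v2 p.1) p.2)
    {p : ℝ × ℝ | p.1 ∈ J ∧ p.2 ∈ Icc 0 (h p.1)}
  /-- the parabolic equation for u -/
  pde : ∀ t ∈ Jr, ∀ x ∈ Ioo 0 (h t),
    deriv (fun s => u s x) t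
      = deriv (deriv (u t)) x
        - χ1 * deriv (fun y => u t y * deriv (v1 t) y) x
        + χ2 * deriv (fun y => u t y * deriv (v2 t) y) x
        + u t x * (a t x - b t x * u t x)
  /-- the elliptic equation for v1 -/
  v1_ode : ∀ t ∈ J, ∀ x ∈ Ioo 0 (h t),
    deriv (deriv (v1 t)) x - lam1 * v1 t x + μ1 * u t x = 0
  /-- the elliptic equation for v2 -/
  v2_ode : ∀ t ∈ J, ∀ x ∈ Ioo 0 (h t),
    deriv (deriv (v2 t)) x - lam2 * v2 t x + μ2 * u t x = 0
  /-- boundary conditions at x = 0 -/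
  bc0 : ∀ t ∈ J, deriv (u t) 0 = 0 ∧ deriv (v1 t) 0 = 0 ∧ deriv (v2 t) 0 = 0
  /-- boundary conditions at x = h(t) -/
  bch : ∀ t ∈ J, u t (h t) = 0 ∧ deriv (v1 t) (h t) = 0 ∧ deriv (v2 t) (h t) = 0

lemma deriv_nonpos_at_right_min {f : ℝ → ℝ} {c d f' : ℝ} (hcd : c < d)
    (hf : HasDerivAt f f' d) (hmin : ∀ x ∈ Ico c d, f d ≤ f x) : f' ≤ 0 := by
  have hslope : Tendsto (slope f d) (𝓝[<] d) (𝓝 f') :=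
    (hasDerivAt_iff_tendsto_slope.1 hf).mono_left
      (nhdsWithin_mono d (fun x hx => ne_of_lt hx))
  refine le_of_tendsto hslope ?_
  filter_upwards [Ioo_mem_nhdsLT_of_mem (show d ∈ Ioc c d from ⟨hcd, le_rfl⟩)] with x hx
  rw [slope_def_field]
  have h1 : 0 ≤ f x - f d := sub_nonneg.2 (hmin x ⟨le_of_lt hx.1, hx.2⟩)
  have h2 : x - d < 0 := sub_neg.2 hx.2
  exact div_nonpos_of_nonneg_of_nonpos h1 h2.le

lemma deriv_nonneg_at_left_min {f : ℝ → ℝ} {c d f' : ℝ} (hcd : c < d)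
    (hf : HasDerivAt f f' c) (hmin : ∀ x ∈ Ioc c d, f c ≤ f x) : 0 ≤ f' := by
  have hslope : Tendsto (slope f c) (𝓝[>] c) (𝓝 f') :=
    (hasDerivAt_iff_tendsto_slope.1 hf).mono_left
      (nhdsWithin_mono c (fun x hx => ne_of_gt hx))
  refine ge_of_tendsto hslope ?_
  filter_upwards [Ioo_mem_nhdsGT_of_mem (show c ∈ Ico c d from ⟨le_rfl, hcd⟩)] with x hx
  rw [slope_def_field]
  have h1 : 0 ≤ f x - f c := sub_nonneg.2 (hmin x ⟨hx.1, hx.2.le⟩)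
  have h2 : 0 < x - c := sub_pos.2 hx.1
  exact div_nonneg h1 h2.le

/-- First and second order conditions at an interior minimum. -/
lemma interior_min_conditions {f : ℝ → ℝ} {l r x0 : ℝ} (hx : x0 ∈ Ioo l r)
    (hf : ∀ x ∈ Ioo l r, DifferentiableAt ℝ f x)
    (hmin : ∀ x ∈ Ioo l r, f x0 ≤ f x)
    (hf' : DifferentiableAt ℝ (deriv f) x0) :
    deriv f x0 = 0 ∧ 0 ≤ deriv (deriv f) x0 := by
  have hloc : IsLocalMin f x0 :=
    Filter.eventually_of_mem (isOpen_Ioo.mem_nhds hx) hmin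
  have h1 : deriv f x0 = 0 := hloc.deriv_eq_zero
  refine ⟨h1, ?_⟩
  by_contra hc
  push_neg at hc
  set c := deriv (deriv f) x0 with hcdef
  have hD : HasDerivAt (deriv f) c x0 := hf'.hasDerivAt
  have hslope : Tendsto (slope (deriv f) x0) (𝓝[<] x0) (𝓝 c) :=
    (hasDerivAt_iff_tendsto_slope.1 hD).mono_left
      (nhdsWithin_mono x0 (fun x hx => ne_of_lt hx))
  have hev : ∀ᶠ x in 𝓝[<] x0, slope (deriv f) x0 x < c / 2 :=
    hslope.eventually (Filter.Tendsto.eventually_lt_const (by linarith) tendsto_id)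
  have hev2 : ∀ᶠ x in 𝓝[<] x0, 0 < deriv f x := by
    filter_upwards [hev, self_mem_nhdsWithin] with x hx1 hx2
    rw [slope_def_field, h1, sub_zero] at hx1
    have hxlt : x - x0 < 0 := sub_neg.2 hx2
    have h3 := (div_lt_iff_of_neg hxlt).1 hx1
    nlinarith [mul_pos_of_neg_of_neg (show c/2 < 0 by linarith) hxlt]
  obtain ⟨x1, hx1lt, hx1⟩ := (nhdsLT_basis_of_exists_lt ⟨l, hx.1⟩).eventually_iff.1 hev2
  set y0 := (max x1 l + x0) / 2 with hy0def
  have hmaxlt : max x1 l < x0 := max_lt hx1lt hx.1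
  have hy0 : y0 ∈ Ioo (max x1 l) x0 := ⟨by simp only [hy0def]; linarith, by simp only [hy0def]; linarith⟩
  have hsub : Icc y0 x0 ⊆ Ioo l r := fun z hz =>
    ⟨lt_of_le_of_lt (le_max_right x1 l) (lt_of_lt_of_le hy0.1 hz.1), lt_of_le_of_lt hz.2 hx.2⟩
  have hmono : StrictMonoOn f (Icc y0 x0) := by
    refine strictMonoOn_of_deriv_pos (convex_Icc _ _) ?_ ?_
    · exact fun z hz => (hf z (hsub hz)).continuousAt.continuousWithinAt
    · intro z hz
      rw [interior_Icc] at hz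
      exact hx1 ⟨lt_of_le_of_lt (le_max_left x1 l) (lt_of_lt_of_le hy0.1 hz.1.le), hz.2⟩
  have := hmono (left_mem_Icc.2 (le_of_lt hy0.2)) (right_mem_Icc.2 (le_of_lt hy0.2)) hy0.2
  exact absurd (hmin y0 (hsub (left_mem_Icc.2 hy0.2.le))) (not_le.2 this)

lemma interior_max_conditions {f : ℝ → ℝ} {l r x0 : ℝ} (hx : x0 ∈ Ioo l r)
    (hf : ∀ x ∈ Ioo l r, DifferentiableAt ℝ f x)
    (hmax : ∀ x ∈ Ioo l r, f x ≤ f x0)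
    (hf' : DifferentiableAt ℝ (deriv f) x0) :
    deriv f x0 = 0 ∧ deriv (deriv f) x0 ≤ 0 := by
  have hneg : ∀ x, deriv (fun y => -f y) x = -deriv f x := fun x => deriv.neg
  have hd2 : DifferentiableAt ℝ (deriv fun y => -f y) x0 := by
    rw [deriv.fun_neg']
    exact hf'.neg
  obtain ⟨h1, h2⟩ := interior_min_conditions hx (fun x hxm => (hf x hxm).neg)
    (fun x hxm => neg_le_neg (hmax x hxm)) hd2
  rw [deriv.neg'] at h1 h2
  have e1 : deriv (fun x => -deriv f x) x0 = -deriv (deriv f) x0 := deriv.neg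
  constructor
  · have := h1; simp only [] at this; linarith [this, neg_eq_zero.1 this]
  · rw [e1] at h2; linarith

/-- Maximum principle bound for the elliptic equation v'' = lam v - mu u with
Neumann boundary conditions. -/
lemma elliptic_sup_bound {v uu : ℝ → ℝ} {lam mu C0 H : ℝ}
    (hH : 0 < H) (hlam : 0 < lam) (hmu : 0 ≤ mu) (hC0 : 0 < C0)
    (hv : ∀ x ∈ Icc 0 H, DifferentiableAt ℝ v x ∧ DifferentiableAt ℝ (deriv v) x)
    (hode : ∀ x ∈ Ioo 0 H, deriv (deriv v) x = lam * v x - mu * uu x)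
    (hu : ∀ x ∈ Icc 0 H, ContinuousAt uu x ∧ 0 ≤ uu x ∧ uu x ≤ C0)
    (hbc0 : deriv v 0 = 0) (hbcH : deriv v H = 0) :
    ∀ x ∈ Icc 0 H, v x ≤ mu * C0 / lam := by
  have hvc : ContinuousOn v (Icc 0 H) := fun x hx => (hv x hx).1.continuousAt.continuousWithinAt
  obtain ⟨xs, hxs, hmax⟩ := isCompact_Icc.exists_isMaxOn (nonempty_Icc.2 hH.le) hvc
  intro x hx
  refine le_trans (hmax hx) ?_
  by_contra hcon
  push_neg at hcon
  -- at the max point, lam * v - mu * uu > 0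
  have hgpos : 0 < lam * v xs - mu * uu xs := by
    have h1 : mu * uu xs ≤ mu * C0 := mul_le_mul_of_nonneg_left (hu xs hxs).2.2 hmu
    have h2 : mu * C0 < lam * v xs := by
      rw [div_lt_iff₀ hlam] at hcon; linarith [hcon]
    linarith
  -- continuity of g := lam*v - mu*uu at xs
  have hgcont : ContinuousAt (fun y => lam * v y - mu * uu y) xs :=
    (continuousAt_const.mul (hv xs hxs).1.continuousAt).sub
      (continuousAt_const.mul (hu xs hxs).1)
  rcases eq_or_lt_of_le hxs.1 with h0 | h0
  · -- xs = 0 : use Neumann at 0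
    have hevent : ∀ᶠ y in 𝓝 xs, 0 < lam * v y - mu * uu y :=
      hgcont (Ioi_mem_nhds hgpos)
    obtain ⟨ε, hε, hball⟩ := Metric.eventually_nhds_iff_ball.1 hevent
    set e := min (ε/2) (H/2) with hedef
    have he : 0 < e := lt_min (by linarith) (by linarith)
    have heH : e ≤ H/2 := min_le_right _ _
    have hIccsub : Icc (0:ℝ) e ⊆ Icc 0 H := Icc_subset_Icc le_rfl (by linarith)
    have hgpos' : ∀ y ∈ Ioo (0:ℝ) e, 0 < deriv (deriv v) y := by
      intro y hy
      rw [hode y ⟨hy.1, lt_of_lt_of_le hy.2 (by linarith)⟩]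
      refine hball y ?_
      simp only [Metric.mem_ball, Real.dist_eq, ← h0]
      rw [sub_zero, abs_of_pos hy.1]
      calc y < e := hy.2
        _ ≤ ε/2 := min_le_left _ _
        _ < ε := by linarith
    have hmono : StrictMonoOn (deriv v) (Icc 0 e) := by
      refine strictMonoOn_of_deriv_pos (convex_Icc _ _) ?_ ?_
      · exact fun z hz => (hv z (hIccsub hz)).2.continuousAt.continuousWithinAt
      · intro z hz; rw [interior_Icc] at hz; exact hgpos' z hz
    have hdpos : ∀ y ∈ Ioo (0:ℝ) e, 0 < deriv v y := by
      intro y hy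
      have := hmono (left_mem_Icc.2 he.le) ⟨hy.1.le, hy.2.le⟩ hy.1
      rwa [hbc0] at this
    have hvmono : StrictMonoOn v (Icc 0 e) := by
      refine strictMonoOn_of_deriv_pos (convex_Icc _ _) ?_ ?_
      · exact fun z hz => (hv z (hIccsub hz)).1.continuousAt.continuousWithinAt
      · intro z hz; rw [interior_Icc] at hz; exact hdpos z hz
    have h5 : v e ≤ v xs := hmax (hIccsub (right_mem_Icc.2 he.le))
    have h6 := hvmono (left_mem_Icc.2 he.le) (right_mem_Icc.2 he.le) he
    rw [← h0] at h5
    linarith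
  · rcases eq_or_lt_of_le hxs.2 with hH0 | hH0
    · -- xs = H : use Neumann at H
      have hevent : ∀ᶠ y in 𝓝 xs, 0 < lam * v y - mu * uu y :=
        hgcont (Ioi_mem_nhds hgpos)
      obtain ⟨ε, hε, hball⟩ := Metric.eventually_nhds_iff_ball.1 hevent
      set e := min (ε/2) (H/2) with hedef
      have he : 0 < e := lt_min (by linarith) (by linarith)
      have heH : e ≤ H/2 := min_le_right _ _
      have hIccsub : Icc (H - e) H ⊆ Icc 0 H := Icc_subset_Icc (by linarith) le_rfl
      have hgpos' : ∀ y ∈ Ioo (H - e) H, 0 < deriv (deriv v) y := by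
        intro y hy
        rw [hode y ⟨by linarith [hy.1], hy.2⟩]
        refine hball y ?_
        simp only [Metric.mem_ball, Real.dist_eq, hH0]
        rw [abs_of_neg (by linarith [hy.2] : y - H < 0)]
        have : e ≤ ε/2 := min_le_left _ _
        linarith [hy.1]
      have hmono : StrictMonoOn (deriv v) (Icc (H - e) H) := by
        refine strictMonoOn_of_deriv_pos (convex_Icc _ _) ?_ ?_
        · exact fun z hz => (hv z (hIccsub hz)).2.continuousAt.continuousWithinAt
        · intro z hz; rw [interior_Icc] at hz; exact hgpos' z hz
      have hdneg : ∀ y ∈ Ioo (H - e) H, deriv v y < 0 := by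
        intro y hy
        have := hmono ⟨hy.1.le, hy.2.le⟩ (right_mem_Icc.2 (by linarith)) hy.2
        rwa [hbcH] at this
      have hvanti : StrictAntiOn v (Icc (H - e) H) := by
        refine strictAntiOn_of_deriv_neg (convex_Icc _ _) ?_ ?_
        · exact fun z hz => (hv z (hIccsub hz)).1.continuousAt.continuousWithinAt
        · intro z hz; rw [interior_Icc] at hz; exact hdneg z hz
      have h5 : v (H - e) ≤ v xs := hmax (hIccsub (left_mem_Icc.2 (by linarith)))
      have h6 := hvanti (left_mem_Icc.2 (by linarith)) (right_mem_Icc.2 (by linarith)) (by linarith)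
      rw [hH0] at h5
      linarith
    · -- xs interior
      have hxsi : xs ∈ Ioo 0 H := ⟨h0, hH0⟩
      obtain ⟨-, h2⟩ := interior_max_conditions hxsi
        (fun y hy => (hv y (Ioo_subset_Icc_self hy)).1)
        (fun y hy => hmax (Ioo_subset_Icc_self hy))
        (hv xs hxs).2
      rw [hode xs hxsi] at h2
      linarith

/-- Gradient bound near the right boundary for the elliptic equation. -/
lemma elliptic_deriv_bound {v uu : ℝ → ℝ} {lam mu C0 H : ℝ}
    (hH : 0 < H) (hlam : 0 < lam) (hmu : 0 ≤ mu) (hC0 : 0 < C0)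
    (hv : ∀ x ∈ Icc 0 H, DifferentiableAt ℝ v x ∧ DifferentiableAt ℝ (deriv v) x)
    (hode : ∀ x ∈ Ioo 0 H, deriv (deriv v) x = lam * v x - mu * uu x)
    (hu : ∀ x ∈ Icc 0 H, ContinuousAt uu x ∧ 0 ≤ uu x ∧ uu x ≤ C0)
    (hvnn : ∀ x ∈ Icc 0 H, 0 ≤ v x)
    (hbc0 : deriv v 0 = 0) (hbcH : deriv v H = 0) :
    ∀ x ∈ Icc 0 H, |deriv v x| ≤ mu * C0 * (H - x) := by
  have hsup := elliptic_sup_bound hH hlam hmu hC0 hv hode hu hbc0 hbcH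
  set K := mu * C0 with hK
  have hKnn : 0 ≤ K := mul_nonneg hmu hC0.le
  have hdcont : ContinuousOn (deriv v) (Icc 0 H) :=
    fun z hz => (hv z hz).2.continuousAt.continuousWithinAt
  -- bound on second derivative on the interior
  have hbd : ∀ y ∈ Ioo 0 H, -K ≤ deriv (deriv v) y ∧ deriv (deriv v) y ≤ K := by
    intro y hy
    have hyI := Ioo_subset_Icc_self hy
    rw [hode y hy]
    constructor
    · have h1 : mu * uu y ≤ mu * C0 := mul_le_mul_of_nonneg_left (hu y hyI).2.2 hmu
      have h2 : 0 ≤ lam * v y := mul_nonneg hlam.le (hvnn y hyI)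
      linarith
    · have h1 : 0 ≤ mu * uu y := mul_nonneg hmu (hu y hyI).2.1
      have h2 : lam * v y ≤ K := by
        have := hsup y hyI
        calc lam * v y ≤ lam * (mu * C0 / lam) := mul_le_mul_of_nonneg_left this hlam.le
          _ = K := by rw [hK]; field_simp
      linarith
  intro x hx
  rw [abs_le]
  constructor
  · -- deriv v x ≥ -K (H - x) : the function y ↦ deriv v y - K y is antitone
    have hanti : AntitoneOn (fun y => deriv v y - K * y) (Icc 0 H) := by
      refine antitoneOn_of_deriv_nonpos (convex_Icc _ _) ?_ ?_ ?_
      · exact (hdcont.sub ((continuous_const.mul continuous_id).continuousOn))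
      · intro z hz
        rw [interior_Icc] at hz
        exact ((hv z (Ioo_subset_Icc_self hz)).2.sub
          ((differentiable_const _).mul differentiable_id).differentiableAt).differentiableWithinAt
      · intro z hz
        rw [interior_Icc] at hz
        have hd : deriv (fun y => deriv v y - K * y) z
            = deriv (deriv v) z - K := by
          have h1 : HasDerivAt (fun y => deriv v y - K * y) (deriv (deriv v) z - K * 1) z :=
            (hv z (Ioo_subset_Icc_self hz)).2.hasDerivAt.sub ((hasDerivAt_id z).const_mul K)
          rw [h1.deriv]; ring
        rw [hd]
        linarith [(hbd z hz).2]
    have := hanti hx (right_mem_Icc.2 hH.le) hx.2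
    dsimp only at this
    rw [hbcH] at this
    linarith
  · have hmono : MonotoneOn (fun y => deriv v y + K * y) (Icc 0 H) := by
      refine monotoneOn_of_deriv_nonneg (convex_Icc _ _) ?_ ?_ ?_
      · exact (hdcont.add ((continuous_const.mul continuous_id).continuousOn))
      · intro z hz
        rw [interior_Icc] at hz
        exact ((hv z (Ioo_subset_Icc_self hz)).2.add
          (((differentiable_const _).mul differentiable_id).differentiableAt)).differentiableWithinAt
      · intro z hz
        rw [interior_Icc] at hz
        have hd : deriv (fun y => deriv v y + K * y) z
            = deriv (deriv v) z + K := by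
          have h1 : HasDerivAt (fun y => deriv v y + K * y) (deriv (deriv v) z + K * 1) z :=
            (hv z (Ioo_subset_Icc_self hz)).2.hasDerivAt.add ((hasDerivAt_id z).const_mul K)
          rw [h1.deriv]; ring
        rw [hd]
        linarith [(hbd z hz).1]
    have := hmono hx (right_mem_Icc.2 hH.le) hx.2
    dsimp only at this
    rw [hbcH] at this
    linarith

/-- derivative of the barrier in the space variable -/
lemma barrier_hasDerivAt_x (c m H : ℝ) (x : ℝ) :
    HasDerivAt (fun y => c * m * (H - y) * (2 - m * (H - y)))
      (-(2 * c * m) * (1 - m * (H - x))) x := by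
  have h1 : HasDerivAt (fun y : ℝ => H - y) (-1) x := by
    simpa using (hasDerivAt_id x).const_sub H
  have h2 : HasDerivAt (fun y => c * m * (H - y)) (c * m * (-1)) x := h1.const_mul (c * m)
  have h3 : HasDerivAt (fun y => 2 - m * (H - y)) (-(m * (-1))) x :=
    (h1.const_mul m).const_sub 2
  have := h2.fun_mul h3
  exact this.congr_deriv (by ring)

/-- derivative of the barrier in the moving variable (first slot) -/
lemma barrier_hasDerivAt_y (c m x : ℝ) (y : ℝ) :
    HasDerivAt (fun z => c * m * (z - x) * (2 - m * (z - x)))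
      (2 * c * m * (1 - m * (y - x))) y := by
  have h1 : HasDerivAt (fun z : ℝ => z - x) 1 y := by
    simpa using (hasDerivAt_id y).sub_const x
  have h2 : HasDerivAt (fun z => c * m * (z - x)) (c * m * 1) y := h1.const_mul (c * m)
  have h3 : HasDerivAt (fun z => 2 - m * (z - x)) (-(m * 1)) y := (h1.const_mul m).const_sub 2
  have := h2.fun_mul h3
  exact this.congr_deriv (by ring)

/-- decay of admissible initial data near the free boundary -/
lemma init_decay {u0 : ℝ → ℝ} {h0 C1 : ℝ} (hh0 : 0 < h0)
    (hsm : ContDiffOn ℝ 2 u0 (Icc 0 h0)) (hdir : u0 h0 = 0)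
    (hder : ∀ x ∈ Icc 0 h0, |deriv u0 x| ≤ C1) :
    ∀ x ∈ Icc 0 h0, u0 x ≤ C1 * (h0 - x) := by
  have hdiff : DifferentiableOn ℝ u0 (Icc 0 h0) :=
    hsm.differentiableOn (by norm_num)
  have hmono : MonotoneOn (fun s => u0 s + C1 * s) (Icc 0 h0) := by
    refine monotoneOn_of_deriv_nonneg (convex_Icc _ _) ?_ ?_ ?_
    · exact hdiff.continuousOn.add (continuous_const.mul continuous_id).continuousOn
    · intro z hz
      rw [interior_Icc] at hz
      have hz' : DifferentiableAt ℝ u0 z :=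
        (hdiff z (Ioo_subset_Icc_self hz)).differentiableAt
          (Icc_mem_nhds hz.1 hz.2)
      exact (hz'.add (((differentiable_const _).mul differentiable_id).differentiableAt)).differentiableWithinAt
    · intro z hz
      rw [interior_Icc] at hz
      have hz' : DifferentiableAt ℝ u0 z :=
        (hdiff z (Ioo_subset_Icc_self hz)).differentiableAt
          (Icc_mem_nhds hz.1 hz.2)
      have h1 : HasDerivAt (fun s => u0 s + C1 * s) (deriv u0 z + C1 * 1) z :=
        hz'.hasDerivAt.add ((hasDerivAt_id z).const_mul C1)
      rw [h1.deriv]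
      have := abs_le.1 (hder z (Ioo_subset_Icc_self hz))
      linarith [this.1]
  intro x hx
  have := hmono hx (right_mem_Icc.2 hh0.le) hx.2
  dsimp only at this
  rw [hdir] at this
  linarith

lemma barrier2_hasDerivAt (c m H : ℝ) (x : ℝ) :
    HasDerivAt (fun y => -(2 * c * m) * (1 - m * (H - y))) (-(2 * c * m * m)) x := by
  have h1 : HasDerivAt (fun y : ℝ => H - y) (-1) x := by
    simpa using (hasDerivAt_id x).const_sub H
  have h2 : HasDerivAt (fun y => 1 - m * (H - y)) (-(m * (-1))) x :=
    (h1.const_mul m).const_sub 1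
  have := h2.const_mul (-(2 * c * m))
  exact this.congr_deriv (by ring)

set_option maxHeartbeats 2000000 in
/-- a bound on h', uniform in T, for solutions with bounded data. -/
theorem stmt10 (ν χ1 χ2 lam1 lam2 μ1 μ2 : ℝ) (a b : ℝ → ℝ → ℝ)
    (hν : 0 < ν) (hχ1 : 0 ≤ χ1) (hχ2 : 0 ≤ χ2) (hμ1 : 0 ≤ μ1) (hμ2 : 0 ≤ μ2)
    (hlam1 : 0 < lam1) (hlam2 : 0 < lam2) (ha : Coeff a) (hb : Coeff b)
    (hH1 : χ1 * μ1 - χ2 * μ2 + Mconst χ1 χ2 lam1 lam2 μ1 μ2 < infOn b) :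
    ∀ C0 > (0:ℝ), ∀ C1 > (0:ℝ), ∃ Mt > (0:ℝ),
      ∀ T > (0:ℝ), ∀ (u0 : ℝ → ℝ) (h0 : ℝ) (u v1 v2 : ℝ → ℝ → ℝ) (h : ℝ → ℝ),
        AdmissibleInit u0 h0 →
        IsSol ν χ1 χ2 lam1 lam2 μ1 μ2 a b (Icc 0 T) (Ioc 0 T) u v1 v2 h →
        h 0 = h0 → (∀ x ∈ Icc 0 h0, u 0 x = u0 x) →
        (∀ x ∈ Icc 0 h0, u0 x ≤ C0) →
        (∀ x ∈ Icc 0 h0, |deriv u0 x| ≤ C1) →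
        (∀ t ∈ Icc 0 T, ∀ x ∈ Icc 0 (h t), 0 ≤ u t x ∧ u t x ≤ C0) →
        ∀ t ∈ Ioc 0 T, 0 ≤ deriv h t ∧ deriv h t ≤ Mt := by
  intro C0 hC0 C1 hC1
  set Q : ℝ := 2 * C0 * (χ1 * μ1 + χ2 * μ2) + χ1 * μ1 * C0 + χ2 * μ2 * C0 + |supOn a| with hQdef
  have hQnn : 0 ≤ Q := by positivity
  set M : ℝ := 1 + C1 / C0 + Q with hMdef
  have hM1 : 1 ≤ M := by
    have : 0 < C1 / C0 := div_pos hC1 hC0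
    simp only [hMdef]; linarith
  have hMpos : 0 < M := lt_of_lt_of_le one_pos hM1
  have hMQ : Q < M := by
    have : 0 < C1 / C0 := div_pos hC1 hC0
    simp only [hMdef]; linarith
  have hC1M : C1 ≤ C0 * M := by
    have h1 : C1 / C0 ≤ M := by simp only [hMdef]; linarith [div_pos hC1 hC0, hQnn]
    calc C1 = C0 * (C1 / C0) := by field_simp
      _ ≤ C0 * M := mul_le_mul_of_nonneg_left h1 hC0.le
  refine ⟨2 * ν * C0 * M, by positivity, ?_⟩
  intro T hT u0 h0 u v1 v2 h hadm sol hinit0 hinitu hu0C0 hu0C1 hbound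
  -- bounds on the coefficient functions
  obtain ⟨Ca, hCa⟩ := ha.bdd
  obtain ⟨Cb, hCb⟩ := hb.bdd
  have hA : ∀ t x, 0 ≤ x → a t x ≤ |supOn a| := by
    intro t x hx
    have h1 : a t x ≤ supOn a := by
      refine le_csSup ⟨Ca, ?_⟩ ⟨t, x, hx, rfl⟩
      rintro y ⟨t', x', hx', rfl⟩
      exact (abs_le.1 (hCa t' x' hx')).2
    exact h1.trans (le_abs_self _)
  have hB : ∀ t x, 0 ≤ x → 0 ≤ b t x := by
    intro t x hx
    have h1 : infOn b ≤ b t x := by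
      refine csInf_le ⟨-Cb, ?_⟩ ⟨t, x, hx, rfl⟩
      rintro y ⟨t', x', hx', rfl⟩
      exact (abs_le.1 (hCb t' x' hx')).1
    linarith [hb.inf_pos]
  -- derivative of h
  have hderiv_h_eq : ∀ t ∈ Icc 0 T, deriv h t = -(ν * deriv (u t) (h t)) :=
    fun t ht => (sol.h_deriv t ht).deriv
  -- Part (i): h' ≥ 0
  have hpartI : ∀ t ∈ Ioc 0 T, 0 ≤ deriv h t := by
    intro t ht
    have htI : t ∈ Icc 0 T := ⟨ht.1.le, ht.2⟩
    have hhp := sol.h_pos t htI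
    have hht : h t ∈ Icc 0 (h t) := ⟨hhp.le, le_rfl⟩
    have hdu : DifferentiableAt ℝ (u t) (h t) := (sol.u_diff_x t ht (h t) hht).1
    have hux : deriv (u t) (h t) ≤ 0 := by
      refine deriv_nonpos_at_right_min (c := 0) hhp hdu.hasDerivAt ?_
      intro x hx
      rw [(sol.bch t htI).1]
      exact sol.u_nonneg t htI x ⟨hx.1, hx.2.le⟩
    rw [hderiv_h_eq t htI]
    have := mul_nonneg hν.le (neg_nonneg.2 hux)
    linarith
  -- setup for the comparison argument
  set δ : ℝ := 1 / M with hδdef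
  have hδpos : 0 < δ := by positivity
  have hMδ : M * δ = 1 := by rw [hδdef, mul_one_div_cancel hMpos.ne']
  set W : ℝ → ℝ → ℝ := fun t x => C0 * M * (h t - x) * (2 - M * (h t - x)) with hWdef
  set L : ℝ → ℝ := fun t => max (h t - δ) 0 with hLdef
  have hL0 : ∀ t, 0 ≤ L t := fun t => le_max_right _ _
  have hLd : ∀ t, h t - δ ≤ L t := fun t => le_max_left _ _
  have hLlt : ∀ t ∈ Icc 0 T, L t < h t :=
    fun t ht => max_lt (by linarith) (sol.h_pos t ht)
  have hhc : ContinuousOn h (Icc 0 T) :=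
    fun t ht => (sol.h_deriv t ht).continuousAt.continuousWithinAt
  -- the compact parameter set and the function to minimize
  set X : ℝ × ℝ → ℝ := fun q => L q.1 + q.2 * (h q.1 - L q.1) with hXdef
  set G : ℝ × ℝ → ℝ := fun q => W q.1 (X q) - u q.1 (X q) with hGdef
  set K2 : Set (ℝ × ℝ) := Icc 0 T ×ˢ Icc (0:ℝ) 1 with hK2def
  have hK2c : IsCompact K2 := isCompact_Icc.prod isCompact_Icc
  have hK2ne : K2.Nonempty :=
    ⟨(0, 0), mem_prod.2 ⟨left_mem_Icc.2 hT.le, left_mem_Icc.2 zero_le_one⟩⟩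
  have hhfst : ContinuousOn (fun q : ℝ × ℝ => h q.1) K2 :=
    hhc.comp continuous_fst.continuousOn (fun q hq => hq.1)
  have hLfst : ContinuousOn (fun q : ℝ × ℝ => L q.1) K2 := by
    simp only [hLdef]
    exact continuous_max.comp_continuousOn
      ((hhfst.sub continuousOn_const).prodMk continuousOn_const)
  have hXcont : ContinuousOn X K2 :=
    hLfst.add (continuous_snd.continuousOn.mul (hhfst.sub hLfst))
  have hXrange : ∀ q ∈ K2, L q.1 ≤ X q ∧ X q ≤ h q.1 := by
    intro q hq
    have hs : q.2 ∈ Icc (0:ℝ) 1 := hq.2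
    have hLh : L q.1 ≤ h q.1 := (hLlt q.1 hq.1).le
    have hnn : 0 ≤ q.2 * (h q.1 - L q.1) := mul_nonneg hs.1 (by linarith only [hLh])
    have hle : q.2 * (h q.1 - L q.1) ≤ h q.1 - L q.1 :=
      mul_le_of_le_one_left (by linarith only [hLh]) hs.2
    constructor
    · simp only [hXdef]; linarith only [hnn]
    · simp only [hXdef]; linarith only [hle]
  have hXIcc : ∀ q ∈ K2, X q ∈ Icc 0 (h q.1) := by
    intro q hq
    exact ⟨le_trans (hL0 q.1) (hXrange q hq).1, (hXrange q hq).2⟩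
  have hucont2 : ContinuousOn (fun q : ℝ × ℝ => u q.1 (X q)) K2 := by
    have := sol.u_cont.comp (continuous_fst.continuousOn.prodMk hXcont)
      (fun q hq => ⟨hq.1, hXIcc q hq⟩)
    exact this
  have hGcont : ContinuousOn G K2 := by
    have hWc : ContinuousOn (fun q : ℝ × ℝ => W q.1 (X q)) K2 := by
      simp only [hWdef]
      exact (continuousOn_const.mul (hhfst.sub hXcont)).mul
        (continuousOn_const.sub (continuousOn_const.mul (hhfst.sub hXcont)))
    exact hWc.sub hucont2
  obtain ⟨q0, hq0, hq0min'⟩ := hK2c.exists_isMinOn hK2ne hGcont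
  have hq0min : ∀ q ∈ K2, G q0 ≤ G q := fun q hq => hq0min' hq
  set t0 := q0.1 with ht0def
  set x0 := X q0 with hx0def
  have ht0Icc : t0 ∈ Icc 0 T := hq0.1
  have hx0mem : L t0 ≤ x0 ∧ x0 ≤ h t0 := hXrange q0 hq0
  have hz0val : G q0 = W t0 x0 - u t0 x0 := rfl
  -- the key minimality property
  have minP : ∀ t ∈ Icc 0 T, ∀ x, L t ≤ x → x ≤ h t → G q0 ≤ W t x - u t x := by
    intro t ht x hx1 hx2
    have hgap : 0 < h t - L t := by linarith [hLlt t ht]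
    set s := (x - L t) / (h t - L t) with hsdef
    have hs : s ∈ Icc (0:ℝ) 1 :=
      ⟨div_nonneg (by linarith) hgap.le, (div_le_one hgap).2 (by linarith)⟩
    have hxeq : X (t, s) = x := by
      simp only [hXdef, hsdef]
      field_simp
      ring
    calc G q0 ≤ G (t, s) := hq0min (t, s) ⟨ht, hs⟩
      _ = W t x - u t x := by simp only [hGdef, hxeq]
  -- the minimum is nonnegative
  have hz0 : 0 ≤ G q0 := by
    by_contra hneg
    push_neg at hneg
    -- case x0 = h t0
    rcases eq_or_lt_of_le hx0mem.2 with hxh | hxh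
    · have : G q0 = 0 := by
        rw [hz0val, hxh, (sol.bch t0 ht0Icc).1]
        simp [hWdef]
      linarith
    rcases eq_or_lt_of_le ht0Icc.1 with ht00 | ht00
    · -- t0 = 0 : initial data
      have hh0 : h t0 = h0 := by rw [← ht00, hinit0]
      have hx0Icc : x0 ∈ Icc 0 h0 := by
        constructor
        · linarith [hL0 t0, hx0mem.1]
        · rw [← hh0]; exact hx0mem.2
      have hu00 : u t0 x0 = u0 x0 := by
        rw [← ht00]; exact hinitu x0 hx0Icc
      have hdecay : u0 x0 ≤ C1 * (h0 - x0) :=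
        init_decay hadm.h0_pos hadm.smooth hadm.dirichlet hu0C1 x0 hx0Icc
      have hd : h t0 - x0 ≤ δ := by linarith [hLd t0, hx0mem.1]
      have hdnn : 0 ≤ h t0 - x0 := by linarith [hx0mem.2]
      have hWlb : C0 * M * (h t0 - x0) ≤ W t0 x0 := by
        simp only [hWdef]
        have hθ : M * (h t0 - x0) ≤ 1 := by
          calc M * (h t0 - x0) ≤ M * δ := mul_le_mul_of_nonneg_left hd hMpos.le
            _ = 1 := hMδ
        have hP : 0 ≤ C0 * M * (h t0 - x0) := mul_nonneg (mul_nonneg hC0.le hMpos.le) hdnn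
        have h5 : C0 * M * (h t0 - x0) * 1 ≤ C0 * M * (h t0 - x0) * (2 - M * (h t0 - x0)) :=
          mul_le_mul_of_nonneg_left (by linarith only [hθ]) hP
        linarith only [h5]
      have : 0 ≤ G q0 := by
        rw [hz0val, hu00]
        have h1 : C1 * (h0 - x0) ≤ C0 * M * (h0 - x0) := by
          have h6 : 0 ≤ h0 - x0 := by rw [← hh0]; exact hdnn
          exact mul_le_mul_of_nonneg_right hC1M h6
        rw [← hh0] at h1 hdecay
        linarith only [hWlb, hdecay, h1]
      linarith only [this, hneg]
    -- now t0 > 0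
    have ht0Ioc : t0 ∈ Ioc 0 T := ⟨ht00, ht0Icc.2⟩
    rcases eq_or_lt_of_le hx0mem.1 with hxL | hxL
    · -- x0 = L t0
      rcases le_or_gt 0 (h t0 - δ) with hcase | hcase
      · -- L t0 = h t0 - δ, so W = C0 there
        have hLeq : L t0 = h t0 - δ := max_eq_left hcase
        have hWeq : W t0 x0 = C0 := by
          simp only [hWdef, ← hxL, hLeq]
          have : h t0 - (h t0 - δ) = δ := by ring
          rw [this]
          linear_combination (-(C0 * (M * δ - 1))) * hMδ
        have hx0Icc : x0 ∈ Icc 0 (h t0) := ⟨by linarith [hL0 t0, hx0mem.1], hx0mem.2⟩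
        have := (hbound t0 ht0Icc x0 hx0Icc).2
        rw [hz0val, hWeq] at hneg
        linarith only [this, hneg]
      · -- L t0 = 0, x0 = 0 : Neumann boundary condition
        have hLeq : L t0 = 0 := max_eq_right (by linarith)
        have hx00 : x0 = 0 := by rw [← hxL, hLeq]
        have hhlt : h t0 < δ := by linarith
        have hdu : DifferentiableAt ℝ (u t0) 0 :=
          (sol.u_diff_x t0 ht0Ioc 0 ⟨le_rfl, (sol.h_pos t0 ht0Icc).le⟩).1
        have hfd : HasDerivAt (fun x => W t0 x - u t0 x)
            (-(2 * C0 * M) * (1 - M * (h t0 - 0)) - deriv (u t0) 0) 0 :=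
          (barrier_hasDerivAt_x C0 M (h t0) 0).sub hdu.hasDerivAt
        have hge : 0 ≤ -(2 * C0 * M) * (1 - M * (h t0 - 0)) - deriv (u t0) 0 := by
          refine deriv_nonneg_at_left_min (d := h t0) (sol.h_pos t0 ht0Icc) hfd ?_
          intro x hx
          have h1 := minP t0 ht0Icc x (by rw [hLeq]; exact hx.1.le) hx.2
          have h2 : W t0 0 - u t0 0 = G q0 := by rw [hz0val, hx00]
          rw [h2]
          exact h1
        rw [(sol.bc0 t0 ht0Icc).1] at hge
        have hθ : M * (h t0 - 0) < 1 := by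
          rw [sub_zero]
          calc M * h t0 < M * δ := mul_lt_mul_of_pos_left hhlt hMpos
            _ = 1 := hMδ
        have h7 : 0 < (2 * C0 * M) * (1 - M * (h t0 - 0)) :=
          mul_pos (by positivity) (by linarith only [hθ])
        linarith only [hge, h7]
    · -- interior case
      set H0 := h t0 with hH0def
      have hH0pos : 0 < H0 := sol.h_pos t0 ht0Icc
      have hx0pos : 0 < x0 := lt_of_le_of_lt (hL0 t0) hxL
      have hx0Icc : x0 ∈ Icc 0 H0 := ⟨hx0pos.le, hx0mem.2⟩
      have hx0Ioo : x0 ∈ Ioo 0 H0 := ⟨hx0pos, hxh⟩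
      have hd : H0 - x0 < δ := by linarith [hLd t0]
      have hdnn : 0 ≤ H0 - x0 := by linarith
      have hθ1 : M * (H0 - x0) ≤ 1 := by
        calc M * (H0 - x0) ≤ M * δ := mul_le_mul_of_nonneg_left hd.le hMpos.le
          _ = 1 := hMδ
      have hθnn : 0 ≤ M * (H0 - x0) := mul_nonneg hMpos.le hdnn
      -- spatial minimum conditions
      have hudiff : ∀ x ∈ Icc 0 H0,
          DifferentiableAt ℝ (u t0) x ∧ DifferentiableAt ℝ (deriv (u t0)) x :=
        fun x hx => sol.u_diff_x t0 ht0Ioc x hx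
      set f : ℝ → ℝ := fun x => W t0 x - u t0 x with hfdef
      have hfdiff : ∀ x ∈ Ioo (L t0) H0, DifferentiableAt ℝ f x := by
        intro x hx
        have hxI : x ∈ Icc 0 H0 := ⟨le_trans (hL0 t0) hx.1.le, hx.2.le⟩
        exact ((barrier_hasDerivAt_x C0 M H0 x).differentiableAt).sub (hudiff x hxI).1
      have hfmin : ∀ x ∈ Ioo (L t0) H0, f x0 ≤ f x := by
        intro x hx
        have h1 := minP t0 ht0Icc x hx.1.le hx.2.le
        have h2 : f x0 = G q0 := (hz0val).symm
        rw [h2]; exact h1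
      -- eventual form of deriv f
      set g : ℝ → ℝ := fun x => -(2 * C0 * M) * (1 - M * (H0 - x)) - deriv (u t0) x with hgdef
      have hevg : deriv f =ᶠ[nhds x0] g := by
        filter_upwards [isOpen_Ioo.mem_nhds hx0Ioo] with x hx
        have hxI : x ∈ Icc 0 H0 := ⟨hx.1.le, hx.2.le⟩
        exact ((barrier_hasDerivAt_x C0 M H0 x).sub (hudiff x hxI).1.hasDerivAt).deriv
      have hgdiff : DifferentiableAt ℝ g x0 :=
        (barrier2_hasDerivAt C0 M H0 x0).differentiableAt.sub (hudiff x0 hx0Icc).2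
      have hfdd : DifferentiableAt ℝ (deriv f) x0 :=
        hevg.differentiableAt_iff.2 hgdiff
      have hx0IooL : x0 ∈ Ioo (L t0) H0 := ⟨hxL, hxh⟩
      obtain ⟨hfd0, hfdd0⟩ := interior_min_conditions hx0IooL hfdiff hfmin hfdd
      -- extract information
      have hux_eq : deriv (u t0) x0 = -(2 * C0 * M) * (1 - M * (H0 - x0)) := by
        have h1 : deriv f x0 = g x0 := hevg.self_of_nhds
        rw [hfd0] at h1
        simp only [hgdef] at h1
        linarith
      have hgderiv : HasDerivAt g (-(2 * C0 * M * M) - deriv (deriv (u t0)) x0) x0 :=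
        (barrier2_hasDerivAt C0 M H0 x0).sub (hudiff x0 hx0Icc).2.hasDerivAt
      have huxx : deriv (deriv (u t0)) x0 ≤ -(2 * C0 * M * M) := by
        have h1 : deriv (deriv f) x0 = deriv g x0 := hevg.deriv_eq
        rw [h1, hgderiv.deriv] at hfdd0
        linarith
      -- time direction
      have hcontt : ContinuousAt h t0 := (sol.h_deriv t0 ht0Icc).continuousAt
      have hopen : ∀ᶠ s in nhds t0, h s ∈ Ioo x0 (x0 + δ) := by
        refine hcontt (isOpen_Ioo.mem_nhds ?_)
        exact ⟨hxh, by linarith⟩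
      obtain ⟨ε, hε, hball⟩ := Metric.eventually_nhds_iff_ball.1 hopen
      set ε' := min (ε / 2) t0 with hε'def
      have hε'pos : 0 < ε' := lt_min (by linarith) ht00
      have hε't0 : ε' ≤ t0 := min_le_right _ _
      set ψ : ℝ → ℝ := fun s => C0 * M * (h s - x0) * (2 - M * (h s - x0)) - u s x0
        with hψdef
      have hψmin : ∀ s ∈ Ico (t0 - ε') t0, ψ t0 ≤ ψ s := by
        intro s hs
        have hsball : h s ∈ Ioo x0 (x0 + δ) := by
          refine hball s ?_
          rw [Metric.mem_ball, Real.dist_eq]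
          have : ε' ≤ ε / 2 := min_le_left _ _
          rw [abs_of_neg (by linarith [hs.2] : s - t0 < 0)]
          linarith [hs.1]
        have hsIcc : s ∈ Icc 0 T := ⟨by linarith [hs.1], by linarith [hs.2, ht0Icc.2]⟩
        have h1 := minP s hsIcc x0 (max_le (by linarith [hsball.2]) hx0pos.le)
          hsball.1.le
        have h2 : ψ t0 = G q0 := by rw [hz0val]
        rw [h2]
        exact h1
      have hut_diff : DifferentiableAt ℝ (fun s => u s x0) t0 :=
        sol.u_diff_t t0 ht0Ioc x0 hx0Icc
      have hψd : HasDerivAt ψ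
          (2 * C0 * M * (1 - M * (h t0 - x0)) * (-(ν * deriv (u t0) (h t0)))
            - deriv (fun s => u s x0) t0) t0 := by
        have hcomp := (barrier_hasDerivAt_y C0 M x0 (h t0)).comp t0 (sol.h_deriv t0 ht0Icc)
        exact (hcomp.sub hut_diff.hasDerivAt)
      have hψle : 2 * C0 * M * (1 - M * (h t0 - x0)) * (-(ν * deriv (u t0) (h t0)))
          - deriv (fun s => u s x0) t0 ≤ 0 :=
        deriv_nonpos_at_right_min (by linarith : t0 - ε' < t0) hψd hψmin
      have hwt_nn : 0 ≤ 2 * C0 * M * (1 - M * (h t0 - x0)) * (-(ν * deriv (u t0) (h t0))) := by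
        have h1 : 0 ≤ -(ν * deriv (u t0) (h t0)) := by
          rw [← hderiv_h_eq t0 ht0Icc]; exact hpartI t0 ht0Ioc
        have h2 : 0 ≤ 1 - M * (h t0 - x0) := by linarith [hθ1]
        positivity
      have hut_nn : 0 ≤ deriv (fun s => u s x0) t0 := by linarith
      -- elliptic estimates
      have hucontA : ∀ x ∈ Icc 0 H0, ContinuousAt (u t0) x ∧ 0 ≤ u t0 x ∧ u t0 x ≤ C0 := by
        intro x hx
        exact ⟨(hudiff x hx).1.continuousAt, (hbound t0 ht0Icc x hx).1,
          (hbound t0 ht0Icc x hx).2⟩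
      have hode1 : ∀ x ∈ Ioo 0 H0, deriv (deriv (v1 t0)) x = lam1 * v1 t0 x - μ1 * u t0 x := by
        intro x hx
        have := sol.v1_ode t0 ht0Icc x hx
        linarith
      have hode2 : ∀ x ∈ Ioo 0 H0, deriv (deriv (v2 t0)) x = lam2 * v2 t0 x - μ2 * u t0 x := by
        intro x hx
        have := sol.v2_ode t0 ht0Icc x hx
        linarith
      have hV1x : |deriv (v1 t0) x0| ≤ μ1 * C0 * (H0 - x0) :=
        elliptic_deriv_bound hH0pos hlam1 hμ1 hC0 (fun x hx => sol.v1_diff_x t0 ht0Icc x hx)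
          hode1 hucontA (sol.v1_nonneg t0 ht0Icc) (sol.bc0 t0 ht0Icc).2.1
          (sol.bch t0 ht0Icc).2.1 x0 hx0Icc
      have hV2x : |deriv (v2 t0) x0| ≤ μ2 * C0 * (H0 - x0) :=
        elliptic_deriv_bound hH0pos hlam2 hμ2 hC0 (fun x hx => sol.v2_diff_x t0 ht0Icc x hx)
          hode2 hucontA (sol.v2_nonneg t0 ht0Icc) (sol.bc0 t0 ht0Icc).2.2
          (sol.bch t0 ht0Icc).2.2 x0 hx0Icc
      have hV2 : v2 t0 x0 ≤ μ2 * C0 / lam2 :=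
        elliptic_sup_bound hH0pos hlam2 hμ2 hC0 (fun x hx => sol.v2_diff_x t0 ht0Icc x hx)
          hode2 hucontA (sol.bc0 t0 ht0Icc).2.2 (sol.bch t0 ht0Icc).2.2 x0 hx0Icc
      have hV1nn : 0 ≤ v1 t0 x0 := sol.v1_nonneg t0 ht0Icc x0 hx0Icc
      have hV2nn : 0 ≤ v2 t0 x0 := sol.v2_nonneg t0 ht0Icc x0 hx0Icc
      -- the PDE at (t0, x0)
      have hpde := sol.pde t0 ht0Ioc x0 hx0Ioo
      have hd1 : deriv (fun y => u t0 y * deriv (v1 t0) y) x0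
          = deriv (u t0) x0 * deriv (v1 t0) x0 + u t0 x0 * deriv (deriv (v1 t0)) x0 :=
        ((hudiff x0 hx0Icc).1.hasDerivAt.mul
          (sol.v1_diff_x t0 ht0Icc x0 hx0Icc).2.hasDerivAt).deriv
      have hd2 : deriv (fun y => u t0 y * deriv (v2 t0) y) x0
          = deriv (u t0) x0 * deriv (v2 t0) x0 + u t0 x0 * deriv (deriv (v2 t0)) x0 :=
        ((hudiff x0 hx0Icc).1.hasDerivAt.mul
          (sol.v2_diff_x t0 ht0Icc x0 hx0Icc).2.hasDerivAt).deriv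
      rw [hd1, hd2, hode1 x0 hx0Ioo, hode2 x0 hx0Ioo] at hpde
      -- abbreviations
      set ux := deriv (u t0) x0 with huxdef
      set uxx := deriv (deriv (u t0)) x0 with huxxdef
      set uu := u t0 x0 with huudef
      set V1 := v1 t0 x0 with hV1def
      set V2 := v2 t0 x0 with hV2def
      set V1x := deriv (v1 t0) x0 with hV1xdef
      set V2x := deriv (v2 t0) x0 with hV2xdef
      have huu1 : 0 ≤ uu := (hbound t0 ht0Icc x0 hx0Icc).1
      have huu2 : uu ≤ C0 := (hbound t0 ht0Icc x0 hx0Icc).2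
      have hAx : a t0 x0 ≤ |supOn a| := hA t0 x0 hx0pos.le
      have hBx : 0 ≤ b t0 x0 := hB t0 x0 hx0pos.le
      -- bound the chemotaxis drift terms
      have hux_abs : |ux| ≤ 2 * C0 * M := by
        rw [hux_eq, abs_mul]
        have h1 : |(-(2 * C0 * M))| = 2 * C0 * M := by
          rw [abs_neg, abs_of_nonneg (by positivity)]
        have h2 : |1 - M * (H0 - x0)| ≤ 1 := by
          rw [abs_of_nonneg (by linarith)]
          linarith
        rw [h1]
        calc 2 * C0 * M * |1 - M * (H0 - x0)| ≤ 2 * C0 * M * 1 :=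
              mul_le_mul_of_nonneg_left h2 (by positivity)
          _ = 2 * C0 * M := mul_one _
      have hdrift1 : -(χ1 * (ux * V1x)) ≤ 2 * χ1 * μ1 * C0 ^ 2 := by
        have h1 : |ux * V1x| ≤ (2 * C0 * M) * (μ1 * C0 * (H0 - x0)) := by
          rw [abs_mul]
          exact mul_le_mul hux_abs hV1x (abs_nonneg _) (by positivity)
        have h2 : (2 * C0 * M) * (μ1 * C0 * (H0 - x0)) ≤ 2 * μ1 * C0 ^ 2 := by
          have e : (2 * C0 * M) * (μ1 * C0 * (H0 - x0)) = 2 * μ1 * C0 ^ 2 * (M * (H0 - x0)) := by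
            ring
          rw [e]
          calc 2 * μ1 * C0 ^ 2 * (M * (H0 - x0)) ≤ 2 * μ1 * C0 ^ 2 * 1 :=
                mul_le_mul_of_nonneg_left hθ1 (by positivity)
            _ = 2 * μ1 * C0 ^ 2 := mul_one _
        have h3 : -(ux * V1x) ≤ 2 * μ1 * C0 ^ 2 := by
          have h6 := neg_abs_le (ux * V1x)
          linarith only [h1, h2, h6]
        calc -(χ1 * (ux * V1x)) = χ1 * (-(ux * V1x)) := by ring
          _ ≤ χ1 * (2 * μ1 * C0 ^ 2) := mul_le_mul_of_nonneg_left h3 hχ1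
          _ = 2 * χ1 * μ1 * C0 ^ 2 := by ring
      have hdrift2 : χ2 * (ux * V2x) ≤ 2 * χ2 * μ2 * C0 ^ 2 := by
        have h1 : |ux * V2x| ≤ (2 * C0 * M) * (μ2 * C0 * (H0 - x0)) := by
          rw [abs_mul]
          exact mul_le_mul hux_abs hV2x (abs_nonneg _) (by positivity)
        have h2 : (2 * C0 * M) * (μ2 * C0 * (H0 - x0)) ≤ 2 * μ2 * C0 ^ 2 := by
          have e : (2 * C0 * M) * (μ2 * C0 * (H0 - x0)) = 2 * μ2 * C0 ^ 2 * (M * (H0 - x0)) := by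
            ring
          rw [e]
          calc 2 * μ2 * C0 ^ 2 * (M * (H0 - x0)) ≤ 2 * μ2 * C0 ^ 2 * 1 :=
                mul_le_mul_of_nonneg_left hθ1 (by positivity)
            _ = 2 * μ2 * C0 ^ 2 := mul_one _
        have h3 : ux * V2x ≤ 2 * μ2 * C0 ^ 2 := by
          have h6 := le_abs_self (ux * V2x)
          linarith only [h1, h2, h6]
        calc χ2 * (ux * V2x) ≤ χ2 * (2 * μ2 * C0 ^ 2) := mul_le_mul_of_nonneg_left h3 hχ2
          _ = 2 * χ2 * μ2 * C0 ^ 2 := by ring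
      -- reaction terms
      have hreact1 : -(χ1 * (uu * (lam1 * V1 - μ1 * uu))) ≤ χ1 * μ1 * C0 ^ 2 := by
        have h1 : 0 ≤ χ1 * lam1 * uu * V1 := by positivity
        have h0 : uu ^ 2 ≤ C0 ^ 2 := pow_le_pow_left₀ huu1 huu2 2
        have h2 : χ1 * μ1 * uu ^ 2 ≤ χ1 * μ1 * C0 ^ 2 :=
          mul_le_mul_of_nonneg_left h0 (by positivity)
        have e : -(χ1 * (uu * (lam1 * V1 - μ1 * uu)))
            = χ1 * μ1 * uu ^ 2 - χ1 * lam1 * uu * V1 := by ring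
        rw [e]
        linarith only [h1, h2]
      have hreact2 : χ2 * (uu * (lam2 * V2 - μ2 * uu)) ≤ χ2 * μ2 * C0 ^ 2 := by
        have h1 : lam2 * V2 ≤ μ2 * C0 := by
          have := mul_le_mul_of_nonneg_left hV2 hlam2.le
          rwa [mul_div_cancel₀ (μ2 * C0) hlam2.ne'] at this
        have h2 : 0 ≤ χ2 * μ2 * uu ^ 2 := by positivity
        have h3 : uu * (lam2 * V2) ≤ C0 * (μ2 * C0) := by
          have h4 : 0 ≤ lam2 * V2 := by positivity
          exact mul_le_mul huu2 h1 h4 hC0.le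
        have e : χ2 * (uu * (lam2 * V2 - μ2 * uu))
            = χ2 * (uu * (lam2 * V2)) - χ2 * μ2 * uu ^ 2 := by ring
        have h5 : χ2 * (uu * (lam2 * V2)) ≤ χ2 * (C0 * (μ2 * C0)) :=
          mul_le_mul_of_nonneg_left h3 hχ2
        rw [e]
        have e2 : χ2 * (C0 * (μ2 * C0)) = χ2 * μ2 * C0 ^ 2 := by ring
        linarith only [h2, h5, e2]
      have hlogis : uu * (a t0 x0 - b t0 x0 * uu) ≤ C0 * |supOn a| := by
        have h1 : uu * a t0 x0 ≤ C0 * |supOn a| := by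
          have h2 : uu * a t0 x0 ≤ uu * |supOn a| := mul_le_mul_of_nonneg_left hAx huu1
          have h3 : uu * |supOn a| ≤ C0 * |supOn a| :=
            mul_le_mul_of_nonneg_right huu2 (abs_nonneg _)
          linarith only [h2, h3]
        have h4 : 0 ≤ b t0 x0 * uu ^ 2 := mul_nonneg hBx (sq_nonneg uu)
        have e : uu * (a t0 x0 - b t0 x0 * uu) = uu * a t0 x0 - b t0 x0 * uu ^ 2 := by ring
        rw [e]
        linarith only [h1, h4]
      -- put everything together
      have hfinal : deriv (fun s => u s x0) t0 ≤ -(2 * C0 * M * M) + C0 * Q := by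
        rw [hpde]
        have hQval : C0 * Q = 2 * χ1 * μ1 * C0 ^ 2 + 2 * χ2 * μ2 * C0 ^ 2
            + χ1 * μ1 * C0 ^ 2 + χ2 * μ2 * C0 ^ 2 + C0 * |supOn a| := by
          simp only [hQdef]; ring
        rw [hQval]
        have e1 : deriv (deriv (u t0)) x0
            - χ1 * (deriv (u t0) x0 * deriv (v1 t0) x0 + u t0 x0 * (lam1 * v1 t0 x0 - μ1 * u t0 x0))
            + χ2 * (deriv (u t0) x0 * deriv (v2 t0) x0 + u t0 x0 * (lam2 * v2 t0 x0 - μ2 * u t0 x0))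
            + u t0 x0 * (a t0 x0 - b t0 x0 * u t0 x0)
            = uxx + (-(χ1 * (ux * V1x))) + χ2 * (ux * V2x)
              + (-(χ1 * (uu * (lam1 * V1 - μ1 * uu)))) + χ2 * (uu * (lam2 * V2 - μ2 * uu))
              + uu * (a t0 x0 - b t0 x0 * uu) := by
          simp only [huxdef, huxxdef, huudef, hV1def, hV2def, hV1xdef, hV2xdef]
          ring
        rw [e1]
        linarith only [huxx, hdrift1, hdrift2, hreact1, hreact2, hlogis]
      have hcontra : -(2 * C0 * M * M) + C0 * Q < 0 := by
        have h1 : Q < M * M := lt_of_lt_of_le hMQ (le_mul_of_one_le_left hMpos.le hM1)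
        have h2 : C0 * Q < C0 * (M * M) := mul_lt_mul_of_pos_left h1 hC0
        have h3 : 0 < C0 * (M * M) := mul_pos hC0 (mul_pos hMpos hMpos)
        linarith only [h2, h3]
      linarith only [hut_nn, hfinal, hcontra]
  -- conclusion: the derivative bound at each time
  intro t ht
  refine ⟨hpartI t ht, ?_⟩
  have htIcc : t ∈ Icc 0 T := ⟨ht.1.le, ht.2⟩
  have hhp := sol.h_pos t htIcc
  have hLt : L t < h t := hLlt t htIcc
  have hdu : DifferentiableAt ℝ (u t) (h t) :=
    (sol.u_diff_x t ht (h t) ⟨hhp.le, le_rfl⟩).1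
  have hfd : HasDerivAt (fun x => W t x - u t x)
      (-(2 * C0 * M) * (1 - M * (h t - h t)) - deriv (u t) (h t)) (h t) :=
    (barrier_hasDerivAt_x C0 M (h t) (h t)).sub hdu.hasDerivAt
  have hle : -(2 * C0 * M) * (1 - M * (h t - h t)) - deriv (u t) (h t) ≤ 0 := by
    refine deriv_nonpos_at_right_min hLt hfd ?_
    intro x hx
    have h1 := minP t htIcc x hx.1 hx.2.le
    have h2 : W t (h t) - u t (h t) = 0 := by
      rw [(sol.bch t htIcc).1]
      simp [hWdef]
    rw [h2]
    linarith [hz0]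
  have hge : -(2 * C0 * M) ≤ deriv (u t) (h t) := by
    have : h t - h t = (0:ℝ) := by ring
    rw [this, mul_zero, sub_zero, mul_one] at hle
    linarith
  rw [hderiv_h_eq t htIcc]
  have h6 := mul_le_mul_of_nonneg_left hge hν.le
  have e : ν * (-(2 * C0 * M)) = -(2 * ν * C0 * M) := by ring
  rw [e] at h6
  linarith only [h6]
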